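/- arXiv:1206.3618 — 3 statements merged into one kernel-verified Lean document; each statement's English description precedes it below -/
import Mathlib

section
/- Let X and A be finite nonempty alphabets with A ⊆ X, let n ≥ 1, and let x_{1:n} ∈ A^n. Then −log₂ ξ(x_{1:n}) ≤ log₂ n + |A|·log₂ |X| − log₂ ρ_A(x_{1:n}), where ξ is the Sparse Sequential Dirichlet distribution over X and ρ_A is the Sequential Dirichlet estimator over A. -/
open Finset

/-- `cnt x i` is the number of occurrences of the symbol `x i` among `x 1, …, x (i-1)`,
i.e. the count `c(x_{1:i})` from the paper. -/
def cnt {σ : Type*} [DecidableEq σ] (x : ℕ → σ) (i : ℕ) : ℕ :=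
  ((Finset.Ico 1 i).filter (fun j => x j = x i)).card

/-- `seen x i` is the set `U(x_{<i})` of distinct symbols occurring in `x 1, …, x (i-1)`. -/
def seen {σ : Type*} [DecidableEq σ] (x : ℕ → σ) (i : ℕ) : Finset σ :=
  (Finset.Ico 1 i).image x

/-- The Sequential Dirichlet (Krichevsky–Trofimov) estimator over the alphabet `A`:
`ρ_A(x_{1:n}) = ∏_{i=1}^n (c(x_{1:i}) + 1/2) / (i + |A|/2 - 1)`. -/
noncomputable def rho {σ : Type*} [DecidableEq σ] (A : Finset σ) (x : ℕ → σ) (n : ℕ) : ℝ :=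
  ∏ i ∈ Finset.Icc 1 n, ((cnt x i : ℝ) + 1/2) / ((i : ℝ) + (A.card : ℝ)/2 - 1)

/-- The Sparse Sequential Dirichlet distribution over the alphabet `Xs`:
`ξ(x_{1:n}) = ∏_{i=1}^n f_i` where `f_i = (1/i)·(1/(|X| - |U(x_{<i})|))` if `c(x_{1:i}) = 0`
and `f_i = (1 - 1/i)·(c(x_{1:i}) + 1/2)/(i + |U(x_{<i})|/2 - 1)` otherwise. -/
noncomputable def xi {σ : Type*} [DecidableEq σ] (Xs : Finset σ) (x : ℕ → σ) (n : ℕ) : ℝ :=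
  ∏ i ∈ Finset.Icc 1 n,
    if cnt x i = 0 then
      (1/(i:ℝ)) * (1/((Xs.card : ℝ) - ((seen x i).card : ℝ)))
    else
      (1 - 1/(i:ℝ)) * (((cnt x i : ℝ) + 1/2) / ((i:ℝ) + ((seen x i).card : ℝ)/2 - 1))


lemma cnt_zero_iff' {σ : Type*} [DecidableEq σ] (x : ℕ → σ) (i : ℕ) :
    cnt x i = 0 ↔ x i ∉ seen x i := by
  simp only [cnt, seen, Finset.card_eq_zero, Finset.filter_eq_empty_iff, Finset.mem_image,
    Finset.mem_Ico, not_exists]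
  aesop

lemma telescope' (n : ℕ) (hn : 1 ≤ n) :
    ∏ i ∈ Finset.Icc 2 n, ((i:ℝ)/((i:ℝ)-1)) = n := by
  induction n with
  | zero => omega
  | succ m ih =>
    rcases Nat.lt_or_ge m 1 with h | hm
    · interval_cases m
      simp
    · rw [Finset.prod_Icc_succ_top (by omega : 2 ≤ m+1), ih hm]
      have hm0 : (m:ℝ) ≠ 0 := by positivity
      push_cast
      field_simp
      rw [add_sub_cancel_right, div_self hm0]

/-- Theorem 1 of the paper: for alphabets `A ⊆ X`, `n ≥ 1` and a sequence over `A`,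
the negative log of the Sparse Sequential Dirichlet distribution is bounded by
`log₂ n + |A|·log₂ |X| - log₂ ρ_A(x₁..xₙ)`. -/
theorem sparse_dirichlet_redundancy {σ : Type*} [DecidableEq σ]
    (Xs A : Finset σ) (hA : A.Nonempty) (hAX : A ⊆ Xs)
    (n : ℕ) (hn : 1 ≤ n) (x : ℕ → σ) (hx : ∀ i ∈ Finset.Icc 1 n, x i ∈ A) :
    -Real.logb 2 (xi Xs x n) ≤
      Real.logb 2 (n : ℝ) + (A.card : ℝ) * Real.logb 2 (Xs.card : ℝ)
        - Real.logb 2 (rho A x n) := by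
  classical
  have haN : 1 ≤ A.card := hA.card_pos
  have ha : (1:ℝ) ≤ (A.card:ℝ) := by exact_mod_cast haN
  have hXAN : A.card ≤ Xs.card := Finset.card_le_card hAX
  have hX1 : (1:ℝ) ≤ (Xs.card:ℝ) := le_trans ha (by exact_mod_cast hXAN)
  set r : ℕ → ℝ := fun i => ((cnt x i : ℝ) + 1/2) / ((i : ℝ) + (A.card : ℝ)/2 - 1) with hr
  set f : ℕ → ℝ := fun i => if cnt x i = 0 then
      (1/(i:ℝ)) * (1/((Xs.card : ℝ) - ((seen x i).card : ℝ)))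
    else
      (1 - 1/(i:ℝ)) * (((cnt x i : ℝ) + 1/2) / ((i:ℝ) + ((seen x i).card : ℝ)/2 - 1)) with hf
  set g : ℕ → ℝ := fun i => if cnt x i = 0 then (Xs.card:ℝ) else (i:ℝ)/((i:ℝ)-1) with hg
  -- seen ⊆ A
  have hseen : ∀ i ∈ Finset.Icc 1 n, seen x i ⊆ A := by
    intro i hi s hs
    simp only [seen, Finset.mem_image, Finset.mem_Ico] at hs
    obtain ⟨j, hj, rfl⟩ := hs
    have hin : i ≤ n := (Finset.mem_Icc.1 hi).2
    exact hx j (Finset.mem_Icc.2 ⟨hj.1, by omega⟩)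
  have hscard : ∀ i ∈ Finset.Icc 1 n, ((seen x i).card : ℝ) ≤ (A.card : ℝ) := by
    intro i hi
    exact_mod_cast Finset.card_le_card (hseen i hi)
  -- cnt ≠ 0 → 2 ≤ i
  have hi2 : ∀ i ∈ Finset.Icc 1 n, cnt x i ≠ 0 → 2 ≤ i := by
    intro i hi hc
    have h1 : 1 ≤ i := (Finset.mem_Icc.1 hi).1
    by_contra h
    have : i = 1 := by omega
    subst this
    simp [cnt] at hc
  -- when cnt = 0, seen is a proper subset of Xs
  have hs_lt : ∀ i ∈ Finset.Icc 1 n, cnt x i = 0 →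
      ((seen x i).card : ℝ) + 1 ≤ (Xs.card : ℝ) := by
    intro i hi hc
    have hnotin : x i ∉ seen x i := (cnt_zero_iff' x i).1 hc
    have hsub : seen x i ⊆ Xs := (hseen i hi).trans hAX
    have : (seen x i).card < Xs.card :=
      Finset.card_lt_card ((Finset.ssubset_iff_of_subset hsub).2
        ⟨x i, hAX (hx i hi), hnotin⟩)
    exact_mod_cast this
  have hi1 : ∀ i ∈ Finset.Icc 1 n, (1:ℝ) ≤ (i:ℝ) := by
    intro i hi
    exact_mod_cast (Finset.mem_Icc.1 hi).1
  -- positivity of factors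
  have hfpos : ∀ i ∈ Finset.Icc 1 n, 0 < f i := by
    intro i hi
    have h1 := hi1 i hi
    by_cases hc : cnt x i = 0
    · have := hs_lt i hi hc
      have hs0 : (0:ℝ) ≤ ((seen x i).card:ℝ) := by positivity
      simp only [hf, hc, if_pos]
      have : (0:ℝ) < (Xs.card : ℝ) - ((seen x i).card : ℝ) := by linarith
      positivity
    · have h2 : (2:ℝ) ≤ (i:ℝ) := by exact_mod_cast hi2 i hi hc
      have hs0 : (0:ℝ) ≤ ((seen x i).card:ℝ) := by positivity
      simp only [hf, hc, if_neg, not_false_iff]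
      have hd : (0:ℝ) < (i:ℝ) + ((seen x i).card : ℝ)/2 - 1 := by linarith
      have ho : (0:ℝ) < 1 - 1/(i:ℝ) := by
        have : 1/(i:ℝ) ≤ 1/2 := by
          apply one_div_le_one_div_of_le <;> linarith
        linarith
      have hcpos : (0:ℝ) < (cnt x i : ℝ) + 1/2 := by positivity
      positivity
  have hrpos : ∀ i ∈ Finset.Icc 1 n, 0 < r i := by
    intro i hi
    have h1 := hi1 i hi
    have hd : (0:ℝ) < (i:ℝ) + (A.card:ℝ)/2 - 1 := by linarith
    have hcpos : (0:ℝ) < (cnt x i : ℝ) + 1/2 := by positivity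
    exact div_pos hcpos hd
  -- main termwise bound
  have hmain : ∀ i ∈ Finset.Icc 1 n, r i ≤ g i * f i := by
    intro i hi
    have h1 := hi1 i hi
    have hi0 : (0:ℝ) < (i:ℝ) := by linarith
    by_cases hc : cnt x i = 0
    · simp only [hr, hf, hg, hc, if_pos, Nat.cast_zero]
      have hXs := hs_lt i hi hc
      have hs0 : (0:ℝ) ≤ ((seen x i).card:ℝ) := by positivity
      have hXspos : (0:ℝ) < (Xs.card : ℝ) - ((seen x i).card : ℝ) := by linarith
      have hd : (0:ℝ) < (i:ℝ) + (A.card:ℝ)/2 - 1 := by linarith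
      have step1 : ((0:ℝ) + 1/2) / ((i:ℝ) + (A.card:ℝ)/2 - 1) ≤ 1/(i:ℝ) := by
        rw [div_le_div_iff₀ hd hi0]
        linarith
      have step2 : 1/(i:ℝ) ≤ (Xs.card:ℝ) * ((1/(i:ℝ)) * (1/((Xs.card : ℝ) - ((seen x i).card : ℝ)))) := by
        rw [show (Xs.card:ℝ) * ((1/(i:ℝ)) * (1/((Xs.card : ℝ) - ((seen x i).card : ℝ))))
            = (1/(i:ℝ)) * ((Xs.card:ℝ) / ((Xs.card : ℝ) - ((seen x i).card : ℝ))) by ring]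
        nth_rewrite 1 [show 1/(i:ℝ) = (1/(i:ℝ)) * 1 by ring]
        apply mul_le_mul_of_nonneg_left _ (by positivity)
        rw [le_div_iff₀ hXspos]
        linarith
      calc ((0:ℝ) + 1/2) / ((i:ℝ) + (A.card:ℝ)/2 - 1) ≤ 1/(i:ℝ) := step1
        _ ≤ _ := step2
    · simp only [hr, hf, hg, hc, if_neg, not_false_iff]
      have h2 : (2:ℝ) ≤ (i:ℝ) := by exact_mod_cast hi2 i hi hc
      have hsA := hscard i hi
      have hs0 : (0:ℝ) ≤ ((seen x i).card:ℝ) := by positivity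
      have hds : (0:ℝ) < (i:ℝ) + ((seen x i).card : ℝ)/2 - 1 := by linarith
      have hda : (0:ℝ) < (i:ℝ) + (A.card:ℝ)/2 - 1 := by linarith
      have hcpos : (0:ℝ) < (cnt x i : ℝ) + 1/2 := by positivity
      have hne : (i:ℝ) - 1 ≠ 0 := by linarith
      have h11 : (1 - 1/(i:ℝ)) = ((i:ℝ)-1)/(i:ℝ) := by
        field_simp
      have hone : ((i:ℝ)/((i:ℝ)-1)) * (((i:ℝ)-1)/(i:ℝ)) = 1 := by
        field_simp
      have hkey : ((i:ℝ)/((i:ℝ)-1)) * ((1 - 1/(i:ℝ)) *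
          (((cnt x i : ℝ) + 1/2) / ((i:ℝ) + ((seen x i).card : ℝ)/2 - 1)))
          = ((cnt x i : ℝ) + 1/2) / ((i:ℝ) + ((seen x i).card : ℝ)/2 - 1) := by
        rw [h11, ← mul_assoc, hone, one_mul]
      rw [hkey]
      gcongr
  -- product bound
  have hprod : rho A x n ≤ (∏ i ∈ Finset.Icc 1 n, g i) * xi Xs x n := by
    have h := Finset.prod_le_prod (fun i hi => (hrpos i hi).le) hmain
    rw [Finset.prod_mul_distrib] at h
    exact h
  -- bound on ∏ g
  have hm_le : ((Finset.Icc 1 n).filter (fun i => cnt x i = 0)).card ≤ A.card := by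
    apply Finset.card_le_card_of_injOn x
    · intro i hi
      exact hx i (Finset.mem_filter.1 hi).1
    · have key : ∀ i j : ℕ, 1 ≤ i → i < j → cnt x j = 0 → x i = x j → False := by
        intro i j h1 hlt hcj hij
        have hmem : i ∈ (Finset.Ico 1 j).filter (fun k => x k = x j) := by
          simp only [Finset.mem_filter, Finset.mem_Ico]
          exact ⟨⟨h1, hlt⟩, hij⟩
        have hpos : 0 < cnt x j := Finset.card_pos.2 ⟨i, hmem⟩
        omega
      intro i hi j hj hij
      simp only [Finset.coe_filter, Set.mem_setOf_eq, Finset.mem_Icc] at hi hj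
      rcases lt_trichotomy i j with h | h | h
      · exact absurd (key i j hi.1.1 h hj.2 hij) (not_false)
      · exact h
      · exact absurd (key j i hj.1.1 h hi.2 hij.symm) (not_false)
  have hgbound : ∏ i ∈ Finset.Icc 1 n, g i ≤ (Xs.card:ℝ)^A.card * (n:ℝ) := by
    rw [← Finset.prod_filter_mul_prod_filter_not (Finset.Icc 1 n) (fun i => cnt x i = 0)]
    have h1 : ∏ i ∈ (Finset.Icc 1 n).filter (fun i => cnt x i = 0), g i
        = (Xs.card:ℝ) ^ ((Finset.Icc 1 n).filter (fun i => cnt x i = 0)).card := by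
      rw [Finset.prod_congr rfl (fun i hi => ?_), Finset.prod_const]
      simp only [hg, (Finset.mem_filter.1 hi).2, if_pos]
    have h2 : ∏ i ∈ (Finset.Icc 1 n).filter (fun i => ¬ cnt x i = 0), g i
        ≤ (n:ℝ) := by
      have heq : ∏ i ∈ (Finset.Icc 1 n).filter (fun i => ¬ cnt x i = 0), g i
          = ∏ i ∈ (Finset.Icc 1 n).filter (fun i => ¬ cnt x i = 0), ((i:ℝ)/((i:ℝ)-1)) := by
        refine Finset.prod_congr rfl (fun i hi => ?_)
        simp only [hg, (Finset.mem_filter.1 hi).2, if_neg, not_false_iff]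
      rw [heq, ← telescope' n hn]
      have hsub : (Finset.Icc 1 n).filter (fun i => ¬ cnt x i = 0) ⊆ Finset.Icc 2 n := by
        intro i hi
        have hm := Finset.mem_filter.1 hi
        exact Finset.mem_Icc.2 ⟨hi2 i hm.1 hm.2, (Finset.mem_Icc.1 hm.1).2⟩
      rw [← Finset.prod_sdiff hsub]
      have hone : (1:ℝ) ≤ ∏ i ∈ Finset.Icc 2 n \ ((Finset.Icc 1 n).filter (fun i => ¬ cnt x i = 0)),
          ((i:ℝ)/((i:ℝ)-1)) := by
        have := Finset.prod_le_prod (s := Finset.Icc 2 n \ ((Finset.Icc 1 n).filter (fun i => ¬ cnt x i = 0)))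
          (f := fun _ : ℕ => (1:ℝ)) (g := fun i : ℕ => ((i:ℝ)/((i:ℝ)-1)))
          (fun i _ => zero_le_one) (fun i hi => ?_)
        · simpa using this
        · have h2i : (2:ℝ) ≤ (i:ℝ) := by
            exact_mod_cast (Finset.mem_Icc.1 (Finset.mem_sdiff.1 hi).1).1
          show (1:ℝ) ≤ (i:ℝ)/((i:ℝ)-1)
          rw [le_div_iff₀ (by linarith)]
          linarith
      have hnn : (0:ℝ) ≤ ∏ i ∈ (Finset.Icc 1 n).filter (fun i => ¬ cnt x i = 0), ((i:ℝ)/((i:ℝ)-1)) := by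
        refine Finset.prod_nonneg (fun i hi => ?_)
        have hm := Finset.mem_filter.1 hi
        have h2i : (2:ℝ) ≤ (i:ℝ) := by exact_mod_cast hi2 i hm.1 hm.2
        apply div_nonneg <;> linarith
      exact le_mul_of_one_le_left hnn hone
    rw [h1]
    apply mul_le_mul _ h2 _ (by positivity)
    · exact pow_le_pow_right₀ hX1 hm_le
    · refine Finset.prod_nonneg (fun i hi => ?_)
      simp only [hg]
      split
      · linarith
      · have hmem := Finset.mem_filter.1 hi
        have h2i : (2:ℝ) ≤ (i:ℝ) := by
          exact_mod_cast hi2 i hmem.1 hmem.2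
        apply div_nonneg <;> linarith
  have hxipos : 0 < xi Xs x n := Finset.prod_pos hfpos
  have hrhopos : 0 < rho A x n := Finset.prod_pos hrpos
  have hfinal : rho A x n ≤ (n:ℝ) * ((Xs.card:ℝ)^A.card * xi Xs x n) := by
    calc rho A x n ≤ (∏ i ∈ Finset.Icc 1 n, g i) * xi Xs x n := hprod
      _ ≤ ((Xs.card:ℝ)^A.card * (n:ℝ)) * xi Xs x n := by
          exact mul_le_mul_of_nonneg_right hgbound hxipos.le
      _ = (n:ℝ) * ((Xs.card:ℝ)^A.card * xi Xs x n) := by ring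
  have hnpos : (0:ℝ) < (n:ℝ) := by exact_mod_cast hn
  have hXpos : (0:ℝ) < (Xs.card:ℝ) := by linarith
  have hlog : Real.logb 2 (rho A x n) ≤
      Real.logb 2 ((n:ℝ) * ((Xs.card:ℝ)^A.card * xi Xs x n)) :=
    Real.logb_le_logb_of_le (by norm_num) hrhopos hfinal
  rw [Real.logb_mul (by positivity) (by positivity),
    Real.logb_mul (by positivity) (by positivity), Real.logb_pow] at hlog
  linarith
end

section
/- Let X and A be finite nonempty alphabets with A ⊆ X, let n ≥ 1, and let x_{1:n} ∈ A^n. Then ξ(x_{1:n}) ≥ |X|^{−|A|} · (∏_{i=1}^n (c(x_{1:i}) + 1/2)/(i + |A|/2 − 1)) · ∏_{i=2}^n (1 − 1/i), where ξ is the Sparse Sequential Dirichlet distribution over X. -/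
open Finset

/-- Equation (7) of the paper: for alphabets `A ⊆ X`, `n ≥ 1` and a sequence over `A`,
`ξ ≥ |X|^(-|A|) · (∏ᵢ (c(x₁..xᵢ)+1/2)/(i+|A|/2-1)) · ∏_{i=2}^n (1 - 1/i)`. -/
theorem sparse_dirichlet_product_bound {σ : Type*} [DecidableEq σ]
    (Xs A : Finset σ) (hA : A.Nonempty) (hAX : A ⊆ Xs)
    (n : ℕ) (hn : 1 ≤ n) (x : ℕ → σ) (hx : ∀ i ∈ Finset.Icc 1 n, x i ∈ A) :
    xi Xs x n ≥
      (((Xs.card : ℝ)) ^ A.card)⁻¹ *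
        (∏ i ∈ Finset.Icc 1 n, ((cnt x i : ℝ) + 1/2) / ((i : ℝ) + (A.card : ℝ)/2 - 1)) *
        ∏ i ∈ Finset.Icc 2 n, (1 - 1/(i : ℝ)) := by
  have hXA : A.card ≤ Xs.card := Finset.card_le_card hAX
  have ha1 : (1:ℝ) ≤ (A.card : ℝ) := by exact_mod_cast Finset.card_pos.mpr hA
  have hX1 : (1:ℝ) ≤ (Xs.card : ℝ) := le_trans ha1 (by exact_mod_cast hXA)
  -- symbols seen before position i ≤ n all lie in A
  have hseen : ∀ i ∈ Finset.Icc 1 n, seen x i ⊆ A := by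
    intro i hi s hs
    simp only [seen, Finset.mem_image, Finset.mem_Ico] at hs
    obtain ⟨j, hj, rfl⟩ := hs
    simp only [Finset.mem_Icc] at hi
    exact hx j (Finset.mem_Icc.mpr ⟨hj.1, by omega⟩)
  -- cnt x 1 = 0
  have hcnt1 : cnt x 1 = 0 := by simp [cnt]
  -- cnt x i = 0 → x i ∉ seen x i
  have hnotseen : ∀ i, cnt x i = 0 → x i ∉ seen x i := by
    intro i hc hmem
    simp only [seen, Finset.mem_image, Finset.mem_Ico] at hmem
    obtain ⟨j, hj, hxj⟩ := hmem
    have hmem' : j ∈ (Finset.Ico 1 i).filter (fun j => x j = x i) := by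
      simp only [Finset.mem_filter, Finset.mem_Ico]
      exact ⟨hj, hxj⟩
    have hpos : 0 < cnt x i := Finset.card_pos.mpr ⟨j, hmem'⟩
    omega
  -- number of "new-symbol" indices is at most |A|
  set K := (Finset.Icc 1 n).filter (fun i => cnt x i = 0) with hKdef
  have hKcard : K.card ≤ A.card := by
    apply Finset.card_le_card_of_injOn x
    · intro i hi
      simp only [hKdef, Finset.mem_filter] at hi
      exact hx i (Finset.mem_filter.mp (show i ∈ (Finset.Icc 1 n).filter (fun i => cnt x i = 0) from hi)).1
    · intro i hi j hj hxe
      simp only [Finset.mem_coe, hKdef, Finset.mem_filter, Finset.mem_Icc] at hi hj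
      by_contra hne
      rcases lt_or_gt_of_ne hne with hlt | hlt
      · have hmem' : i ∈ (Finset.Ico 1 j).filter (fun k => x k = x j) := by
          simp only [Finset.mem_filter, Finset.mem_Ico]
          exact ⟨⟨hi.1.1, hlt⟩, hxe⟩
        have hpos : 0 < cnt x j := Finset.card_pos.mpr ⟨i, hmem'⟩
        omega
      · have hmem' : j ∈ (Finset.Ico 1 i).filter (fun k => x k = x i) := by
          simp only [Finset.mem_filter, Finset.mem_Ico]
          exact ⟨⟨hj.1.1, hlt⟩, hxe.symm⟩
        have hpos : 0 < cnt x i := Finset.card_pos.mpr ⟨j, hmem'⟩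
        omega
  -- auxiliary functions
  set h : ℕ → ℝ := fun i => if cnt x i = 0 then ((Xs.card:ℝ))⁻¹ else 1 with hhdef
  set g : ℕ → ℝ := fun i => if i = 1 then 1 else (1 - 1/(i:ℝ)) with hgdef
  set r : ℕ → ℝ := fun i => ((cnt x i : ℝ) + 1/2) / ((i : ℝ) + (A.card : ℝ)/2 - 1) with hrdef
  have hrnn : ∀ i ∈ Finset.Icc 1 n, 0 ≤ r i := by
    intro i hi
    simp only [Finset.mem_Icc] at hi
    have hI : (1:ℝ) ≤ (i:ℝ) := by exact_mod_cast hi.1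
    apply div_nonneg
    · positivity
    · linarith
  have hgnn : ∀ i ∈ Finset.Icc 1 n, 0 ≤ g i := by
    intro i hi
    simp only [Finset.mem_Icc] at hi
    have hI : (1:ℝ) ≤ (i:ℝ) := by exact_mod_cast hi.1
    simp only [hgdef]
    split
    · norm_num
    · have : 1/(i:ℝ) ≤ 1 := by
        rw [div_le_one (by linarith)]; linarith
      linarith
  have hhnn : ∀ i, 0 ≤ h i := by
    intro i; simp only [hhdef]; split <;> positivity
  have hnn : ∀ i ∈ Finset.Icc 1 n, 0 ≤ h i * r i * g i := by
    intro i hi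
    exact mul_nonneg (mul_nonneg (hhnn i) (hrnn i hi)) (hgnn i hi)
  -- termwise bound
  have hterm : ∀ i ∈ Finset.Icc 1 n,
      h i * r i * g i ≤
        (if cnt x i = 0 then
          (1/(i:ℝ)) * (1/((Xs.card : ℝ) - ((seen x i).card : ℝ)))
        else
          (1 - 1/(i:ℝ)) * (((cnt x i : ℝ) + 1/2) / ((i:ℝ) + ((seen x i).card : ℝ)/2 - 1))) := by
    intro i hi
    have hi' := hi
    simp only [Finset.mem_Icc] at hi'
    have hI : (1:ℝ) ≤ (i:ℝ) := by exact_mod_cast hi'.1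
    have hsA : ((seen x i).card : ℝ) ≤ (A.card : ℝ) := by
      exact_mod_cast Finset.card_le_card (hseen i hi)
    have hs0 : (0:ℝ) ≤ ((seen x i).card : ℝ) := by positivity
    by_cases hc : cnt x i = 0
    · -- new symbol
      have hsX : ((seen x i).card : ℝ) + 1 ≤ (Xs.card : ℝ) := by
        have hlt : (seen x i).card < Xs.card := by
          apply Finset.card_lt_card
          constructor
          · exact (hseen i hi).trans hAX
          · intro hsub
            exact hnotseen i hc (hsub (hAX (hx i hi)))
        exact_mod_cast hlt
      simp only [hhdef, hrdef, hgdef, hc, if_true, Nat.cast_zero]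
      by_cases h1 : i = 1
      · subst h1
        rw [if_pos rfl]
        simp only [Nat.cast_one]
        have hd : (0:ℝ) < 1 + (A.card:ℝ)/2 - 1 := by linarith
        have hd2 : (0:ℝ) < (Xs.card:ℝ) - ((seen x 1).card:ℝ) := by linarith
        have hq : ((0:ℝ) + 1/2) / (1 + (A.card:ℝ)/2 - 1) ≤ 1 := by
          rw [div_le_one hd]; linarith
        have step1 : ((Xs.card:ℝ))⁻¹ * (((0:ℝ) + 1/2) / (1 + (A.card:ℝ)/2 - 1)) * 1
            ≤ ((Xs.card:ℝ))⁻¹ := by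
          rw [mul_one]
          exact mul_le_of_le_one_right (by positivity) hq
        refine le_trans step1 ?_
        rw [one_div_one, one_mul, one_div]
        exact inv_anti₀ hd2 (by linarith)
      · rw [if_neg h1]
        have hI2 : (2:ℝ) ≤ (i:ℝ) := by
          have : 2 ≤ i := by omega
          exact_mod_cast this
        have hd : (0:ℝ) < (i:ℝ) + (A.card:ℝ)/2 - 1 := by linarith
        have hd2 : (0:ℝ) < (Xs.card:ℝ) - ((seen x i).card:ℝ) := by linarith
        have hIpos : (0:ℝ) < (i:ℝ) := by linarith
        have hine : ((i:ℝ)) ≠ 0 := by positivity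
        have step1 : ((Xs.card:ℝ))⁻¹ * (((0:ℝ) + 1/2) / ((i:ℝ) + (A.card:ℝ)/2 - 1)) * (1 - 1/(i:ℝ))
            ≤ ((Xs.card:ℝ))⁻¹ * (1/(i:ℝ)) := by
          rw [mul_assoc]
          apply mul_le_mul_of_nonneg_left _ (by positivity)
          rw [div_mul_eq_mul_div, div_le_div_iff₀ hd hIpos]
          have hexp : ((0:ℝ) + 1/2) * (1 - 1/(i:ℝ)) * (i:ℝ) = ((i:ℝ) - 1)/2 := by
            field_simp; ring
          rw [hexp]
          linarith
        refine le_trans step1 ?_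
        rw [mul_comm]
        apply mul_le_mul_of_nonneg_left _ (by positivity)
        rw [one_div]
        exact inv_anti₀ hd2 (by linarith)
    · -- repeated symbol
      simp only [hhdef, hrdef, hgdef, hc, if_false, one_mul]
      have h1 : i ≠ 1 := by
        intro h1; rw [h1] at hc; exact hc hcnt1
      rw [if_neg h1]
      have hI2 : (2:ℝ) ≤ (i:ℝ) := by
        have : 2 ≤ i := by omega
        exact_mod_cast this
      have hg' : (0:ℝ) ≤ 1 - 1/(i:ℝ) := by
        have : 1/(i:ℝ) ≤ 1 := by rw [div_le_one (by linarith)]; linarith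
        linarith
      rw [mul_comm]
      apply mul_le_mul_of_nonneg_left _ hg'
      apply div_le_div_of_nonneg_left (by positivity) (by linarith)
      linarith
  -- combine products
  have hprod : ∏ i ∈ Finset.Icc 1 n, (h i * r i * g i) ≤ xi Xs x n := by
    unfold xi
    exact Finset.prod_le_prod hnn hterm
  rw [Finset.prod_mul_distrib, Finset.prod_mul_distrib] at hprod
  -- evaluate ∏ h
  have hh : ∏ i ∈ Finset.Icc 1 n, h i = ((Xs.card:ℝ))⁻¹ ^ K.card := by
    simp only [hhdef]
    rw [Finset.prod_ite, Finset.prod_const, Finset.prod_const_one, mul_one]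
  -- evaluate ∏ g
  have hgp : ∏ i ∈ Finset.Icc 1 n, g i = ∏ i ∈ Finset.Icc 2 n, (1 - 1/(i:ℝ)) := by
    have hins : Finset.Icc 1 n = insert 1 (Finset.Icc 2 n) := by
      ext j
      simp only [Finset.mem_Icc, Finset.mem_insert]
      omega
    rw [hins, Finset.prod_insert (by simp)]
    simp only [hgdef, if_pos rfl, one_mul]
    apply Finset.prod_congr rfl
    intro j hj
    simp only [Finset.mem_Icc] at hj
    rw [if_neg (by omega)]
  rw [hh, hgp] at hprod
  -- ∏ r and ∏ g nonneg
  have hRnn : 0 ≤ ∏ i ∈ Finset.Icc 1 n, r i := Finset.prod_nonneg hrnn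
  have hGnn : 0 ≤ ∏ i ∈ Finset.Icc 2 n, (1 - 1/(i:ℝ)) := by
    apply Finset.prod_nonneg
    intro j hj
    simp only [Finset.mem_Icc] at hj
    have : (2:ℝ) ≤ (j:ℝ) := by exact_mod_cast hj.1
    have : 1/(j:ℝ) ≤ 1 := by rw [div_le_one (by linarith)]; linarith
    linarith
  have hpow : (((Xs.card : ℝ)) ^ A.card)⁻¹ ≤ ((Xs.card:ℝ))⁻¹ ^ K.card := by
    rw [← inv_pow]
    apply pow_le_pow_of_le_one (by positivity) _ hKcard
    exact inv_le_one_of_one_le₀ hX1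
  calc (((Xs.card : ℝ)) ^ A.card)⁻¹ *
        (∏ i ∈ Finset.Icc 1 n, ((cnt x i : ℝ) + 1/2) / ((i : ℝ) + (A.card : ℝ)/2 - 1)) *
        ∏ i ∈ Finset.Icc 2 n, (1 - 1/(i : ℝ))
      ≤ ((Xs.card:ℝ))⁻¹ ^ K.card *
        (∏ i ∈ Finset.Icc 1 n, r i) *
        ∏ i ∈ Finset.Icc 2 n, (1 - 1/(i : ℝ)) := by
        apply mul_le_mul_of_nonneg_right _ hGnn
        exact mul_le_mul_of_nonneg_right hpow hRnn
    _ ≤ xi Xs x n := hprod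
end

section
/- Let A be a finite nonempty alphabet, let θ : A → [0,1] with Σ_{a∈A} θ(a) = 1, and let μ be the memoryless source μ(x_{1:n}) := ∏_{i=1}^n θ(x_i). Then for every n ≥ 1 and every x_{1:n} ∈ A^n, −log₂( ρ_A(x_{1:n}) / μ(x_{1:n}) ) ≤ ((|A| − 1)/2)·log₂ n + |A| − 1, where ρ_A is the Sequential Dirichlet estimator over A (with the convention that the left side is −∞ when μ(x_{1:n}) = 0). -/
open Finset

open Real Topology Filter in
lemma kt_log_ge {x : ℝ} (hx : 0 ≤ x) : 2*x/(2+x) ≤ Real.log (1+x) := by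
  set g : ℝ → ℝ := fun y => Real.log (1+y) - 2*y/(2+y) with hg
  have hd : ∀ y : ℝ, 0 ≤ y → HasDerivAt g (1/(1+y) - (2*1*(2+y) - 2*y*1)/(2+y)^2) y := by
    intro y hy
    have h1 : HasDerivAt (fun z : ℝ => Real.log (1+z)) (1/(1+y)) y := by
      have := (((hasDerivAt_id y).const_add 1).log (by positivity))
      simpa using this
    have h2 : HasDerivAt (fun z : ℝ => 2*z/(2+z)) ((2*1*(2+y) - 2*y*1)/(2+y)^2) y := by
      have := ((hasDerivAt_id y).const_mul 2).div ((hasDerivAt_id y).const_add 2)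
        (by positivity : (2:ℝ) + id y ≠ 0)
      simpa [Pi.div_def] using this
    exact h1.sub h2
  have hmono : MonotoneOn g (Set.Ici 0) := by
    apply monotoneOn_of_deriv_nonneg (convex_Ici 0)
    · intro y hy
      exact (hd y hy).differentiableAt.continuousAt.continuousWithinAt
    · intro y hy
      rw [interior_Ici] at hy
      exact (hd y (le_of_lt hy)).differentiableAt.differentiableWithinAt
    · intro y hy
      rw [interior_Ici] at hy
      rw [(hd y hy.le).deriv]
      have h1 : (0:ℝ) < 1 + y := by linarith [(Set.mem_Ioi.mp hy).le]
      have h2 : (0:ℝ) < 2 + y := by linarith [(Set.mem_Ioi.mp hy).le]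
      rw [sub_nonneg, div_le_div_iff₀ (by positivity) h1]
      nlinarith [sq_nonneg y]
  have h := hmono (Set.mem_Ici.mpr le_rfl) (Set.mem_Ici.mpr hx) hx
  simp only [hg] at h
  simp at h
  linarith

lemma kt_A2 {n : ℝ} (hn : 1 ≤ n) : 1 ≤ (n + 1/2) * Real.log (1 + 1/n) := by
  have hn0 : 0 < n := by linarith
  have h := kt_log_ge (x := 1/n) (by positivity)
  have he : 2*(1/n)/(2+1/n) = 1/(n+1/2) := by
    rw [div_eq_div_iff (by positivity) (by positivity)]
    field_simp
  rw [he] at h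
  rw [mul_comm, ← div_le_iff₀ (by positivity : (0:ℝ) < n + 1/2), div_eq_mul_inv, one_mul,
    ← one_div]
  exact h

lemma kt_A2' (n : ℕ) (hn : 1 ≤ n) :
    Real.exp 1 * (((n:ℝ)/((n:ℝ)+1))^n * Real.sqrt ((n:ℝ)/((n:ℝ)+1))) ≤ 1 := by
  have hn0 : (0:ℝ) < n := by exact_mod_cast hn
  set r : ℝ := (n:ℝ)/((n:ℝ)+1) with hr
  have hr0 : 0 < r := by positivity
  have hrinv : r⁻¹ = 1 + 1/(n:ℝ) := by
    rw [hr]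
    field_simp
  have hA2 := kt_A2 (n := (n:ℝ)) (by exact_mod_cast hn)
  have hlog : Real.log (r^n * Real.sqrt r) = ((n:ℝ) + 1/2) * Real.log r := by
    rw [Real.log_mul (by positivity) (by positivity), Real.log_pow, Real.log_sqrt hr0.le]
    ring
  have hlr : Real.log (1 + 1/(n:ℝ)) = -Real.log r := by
    rw [← hrinv, Real.log_inv]
  rw [hlr] at hA2
  have hkey : Real.log (r^n * Real.sqrt r) ≤ -1 := by
    rw [hlog]; nlinarith
  have := Real.exp_le_exp.mpr hkey
  rw [Real.exp_log (by positivity)] at this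
  calc Real.exp 1 * (r^n * Real.sqrt r) ≤ Real.exp 1 * Real.exp (-1) := by
        exact mul_le_mul_of_nonneg_left this (Real.exp_pos 1).le
    _ = 1 := by rw [← Real.exp_add]; simp

open Filter Real Topology in
lemma kt_L2 {t : ℝ} (ht : 1 ≤ t) : t * Real.log (1 + 1/t) ≤ 1 + Real.log ((2*t+1)/(2*t+2)) := by
  set φ : ℝ → ℝ := fun y => 1 + Real.log (2*y+1) - Real.log (2*y+2)
      - y * (Real.log (y+1) - Real.log y) with hφ
  have hd : ∀ y : ℝ, 0 < y → HasDerivAt φ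
      (2/(2*y+1) - 2/(2*y+2) - (1 * (Real.log (y+1) - Real.log y) + y * ((y+1)⁻¹ - y⁻¹))) y := by
    intro y hy
    have h1 : HasDerivAt (fun z : ℝ => 1 + Real.log (2*z+1)) (2/(2*y+1)) y := by
      have := ((((hasDerivAt_id y).const_mul 2).add_const 1).log (by positivity)).const_add 1
      simpa using this
    have h2 : HasDerivAt (fun z : ℝ => Real.log (2*z+2)) (2/(2*y+2)) y := by
      have := (((hasDerivAt_id y).const_mul 2).add_const 2).log (by positivity)
      simpa using this
    have h3 : HasDerivAt (fun z : ℝ => z * (Real.log (z+1) - Real.log z))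
        (1 * (Real.log (y+1) - Real.log y) + y * ((y+1)⁻¹ - y⁻¹)) y := by
      have hl : HasDerivAt (fun z : ℝ => Real.log (z+1) - Real.log z) ((y+1)⁻¹ - y⁻¹) y := by
        have ha := ((hasDerivAt_id y).add_const 1).log (by positivity)
        have hb := Real.hasDerivAt_log (ne_of_gt hy)
        simpa [one_div, Pi.sub_def] using ha.sub hb
      simpa [Pi.mul_def] using (hasDerivAt_id y).mul hl
    exact (h1.sub h2).sub h3
  have hanti : AntitoneOn φ (Set.Ici 1) := by
    apply antitoneOn_of_deriv_nonpos (convex_Ici 1)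
    · intro y hy
      have : (0:ℝ) < y := lt_of_lt_of_le one_pos hy
      exact (hd y this).differentiableAt.continuousAt.continuousWithinAt
    · intro y hy
      rw [interior_Ici] at hy
      exact (hd y (lt_trans one_pos hy)).differentiableAt.differentiableWithinAt
    · intro y hy
      rw [interior_Ici] at hy
      have hy0 : (0:ℝ) < y := lt_trans one_pos hy
      rw [(hd y hy0).deriv]
      have hlg : 2/(2*y+1) ≤ Real.log (y+1) - Real.log y := by
        have h := kt_log_ge (x := 1/y) (by positivity)
        have e1 : (1:ℝ) + 1/y = (y+1)/y := by field_simp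
        have e2 : 2*(1/y)/(2+1/y) = 2/(2*y+1) := by
          rw [div_eq_div_iff (by positivity) (by positivity)]
          first
          | (field_simp; ring)
          | field_simp
        rw [e1, e2, Real.log_div (by positivity) (ne_of_gt hy0)] at h
        exact h
      have e3 : y * ((y+1)⁻¹ - y⁻¹) = -(y+1)⁻¹ := by field_simp; ring
      have e4 : 2/(2*y+2) = (y+1)⁻¹ := by rw [eq_comm, inv_eq_iff_eq_inv, eq_comm, inv_div]; ring
      rw [e3, e4]
      linarith
  have hlim : Tendsto φ atTop (𝓝 0) := by
    have hat : Tendsto (fun y : ℝ => 2*y+2) atTop atTop :=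
      tendsto_atTop_add_const_right atTop 2 (Tendsto.const_mul_atTop two_pos tendsto_id)
    have hinv : Tendsto (fun y : ℝ => (2*y+2)⁻¹) atTop (𝓝 0) :=
      tendsto_inv_atTop_zero.comp hat
    have hq : Tendsto (fun y : ℝ => (2*y+1)/(2*y+2)) atTop (𝓝 1) := by
      have h1 : Tendsto (fun y : ℝ => 1 - (2*y+2)⁻¹) atTop (𝓝 (1 - 0)) :=
        tendsto_const_nhds.sub hinv
      rw [sub_zero] at h1
      apply h1.congr'
      filter_upwards [eventually_gt_atTop (0:ℝ)] with y hy
      field_simp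
      ring
    have l1 : Tendsto (fun y : ℝ => Real.log (2*y+1) - Real.log (2*y+2)) atTop (𝓝 0) := by
      have := (Real.continuousAt_log (by norm_num : (1:ℝ) ≠ 0)).tendsto.comp hq
      simp only [Real.log_one] at this
      apply this.congr'
      filter_upwards [eventually_gt_atTop (0:ℝ)] with y hy
      rw [Function.comp_apply, Real.log_div (by positivity) (by positivity)]
    have l2 : Tendsto (fun y : ℝ => y * (Real.log (y+1) - Real.log y)) atTop (𝓝 1) := by
      have h := Real.tendsto_mul_log_one_add_div_atTop 1
      apply h.congr'
      filter_upwards [eventually_gt_atTop (0:ℝ)] with y hy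
      have : (1:ℝ) + 1/y = (y+1)/y := by field_simp
      rw [this, Real.log_div (by positivity) (ne_of_gt hy)]
    have hcomb : Tendsto φ atTop (𝓝 (1 + 0 - 1)) := by
      have := ((tendsto_const_nhds : Tendsto (fun _ : ℝ => (1:ℝ)) atTop (𝓝 1)).add l1).sub l2
      exact this.congr (fun y => by simp only [hφ]; ring)
    simpa using hcomb
  have hpos : 0 ≤ φ t := by
    apply le_of_tendsto hlim
    filter_upwards [eventually_ge_atTop t] with s hs
    exact hanti (Set.mem_Ici.mpr ht) (Set.mem_Ici.mpr (le_trans ht hs)) hs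
  have e5 : Real.log (1 + 1/t) = Real.log (t+1) - Real.log t := by
    rw [show (1:ℝ) + 1/t = (t+1)/t by field_simp, Real.log_div (by positivity) (by positivity)]
  have e6 : Real.log ((2*t+1)/(2*t+2)) = Real.log (2*t+1) - Real.log (2*t+2) := by
    rw [Real.log_div (by positivity) (by positivity)]
  rw [e5, e6]
  simp only [hφ] at hpos
  linarith

lemma kt_L2' (t : ℕ) :
    ((t:ℝ)+1)^(t+1) / (t:ℝ)^t ≤ ((t:ℝ)+1) * (Real.exp 1 * (2*(t:ℝ)+1)/(2*(t:ℝ)+2)) := by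
  rcases Nat.eq_zero_or_pos t with h0 | hpos
  · subst h0
    norm_num
    nlinarith [Real.add_one_le_exp (1:ℝ)]
  · have ht0 : (0:ℝ) < t := by exact_mod_cast hpos
    have ht1 : (1:ℝ) ≤ (t:ℝ) := by exact_mod_cast hpos
    have hL : ((1:ℝ) + 1/t)^t ≤ Real.exp 1 * ((2*(t:ℝ)+1)/(2*(t:ℝ)+2)) := by
      have hb : (0:ℝ) < 1 + 1/t := by positivity
      have : ((1:ℝ) + 1/t)^t = Real.exp ((t:ℝ) * Real.log (1 + 1/t)) := by
        rw [← Real.log_pow, Real.exp_log (by positivity)]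
      rw [this]
      calc Real.exp ((t:ℝ) * Real.log (1 + 1/t))
          ≤ Real.exp (1 + Real.log ((2*(t:ℝ)+1)/(2*(t:ℝ)+2))) := Real.exp_le_exp.mpr (kt_L2 ht1)
        _ = Real.exp 1 * ((2*(t:ℝ)+1)/(2*(t:ℝ)+2)) := by
            rw [Real.exp_add, Real.exp_log (by positivity)]
    have hsplit : ((t:ℝ)+1)^(t+1) / (t:ℝ)^t = ((t:ℝ)+1) * ((1:ℝ) + 1/t)^t := by
      rw [pow_succ]
      rw [show ((1:ℝ) + 1/t) = ((t:ℝ)+1)/t by field_simp]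
      rw [div_pow]
      field_simp
    rw [hsplit, mul_div_assoc]
    exact mul_le_mul_of_nonneg_left hL (by positivity)

lemma kt_B (n k : ℕ) (hn : 1 ≤ n) (hk : 2 ≤ k) :
    Real.sqrt (((n:ℝ)/((n:ℝ)+1))^(k-2)) ≤ ((n:ℝ)+1)/((n:ℝ)+(k:ℝ)/2) := by
  set m : ℕ := k - 2 with hm
  have hkm : (k:ℝ) = (m:ℝ) + 2 := by
    rw [hm]; push_cast [Nat.cast_sub hk]; ring
  have hN1 : (1:ℝ) ≤ (n:ℝ) := by exact_mod_cast hn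
  set N : ℝ := (n:ℝ) with hN
  have hN0 : (0:ℝ) < N := by linarith
  set r : ℝ := N/(N+1) with hr
  have hr0 : 0 < r := by positivity
  set Q : ℝ := (N+1+(m:ℝ)/2)/(N+1) with hQ
  have hQ0 : 0 < Q := by positivity
  -- Bernoulli chain
  have hu0 : (0:ℝ) ≤ 1/(2*N+1) := by positivity
  have hb : 1 + (m:ℝ) * (1/(2*N+1)) ≤ (1 + 1/(2*N+1))^m :=
    one_add_mul_le_pow (by linarith) m
  have hQb : Q ≤ 1 + (m:ℝ) * (1/(2*N+1)) := by
    rw [hQ, div_le_iff₀ (by positivity)]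
    have hhalf : (1:ℝ)/2 ≤ 1/(2*N+1) * (N+1) := by
      rw [div_mul_eq_mul_div, one_mul, div_le_div_iff₀ (by norm_num) (by positivity)]
      linarith
    have h1 := mul_le_mul_of_nonneg_left hhalf (Nat.cast_nonneg (α := ℝ) m)
    nlinarith [h1]
  have hQ1 : Q ≤ (1 + 1/(2*N+1))^m := le_trans hQb hb
  have hsq : (1 + 1/(2*N+1))^2 ≤ 1 + 1/N := by
    rw [show (1:ℝ) + 1/(2*N+1) = (2*N+2)/(2*N+1) by field_simp; ring,
      show (1:ℝ) + 1/N = (N+1)/N by field_simp,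
      div_pow, div_le_div_iff₀ (by positivity) (by positivity)]
    nlinarith
  have hpow : ((1 + 1/(2*N+1))^2)^m ≤ (1 + 1/N)^m :=
    pow_le_pow_left₀ (by positivity) hsq m
  have hQ2 : Q^2 ≤ (1 + 1/N)^m := by
    calc Q^2 ≤ ((1 + 1/(2*N+1))^m)^2 := pow_le_pow_left₀ hQ0.le hQ1 2
      _ = ((1 + 1/(2*N+1))^2)^m := by rw [← pow_mul, ← pow_mul, Nat.mul_comm]
      _ ≤ (1 + 1/N)^m := hpow
  have hrinv : r * (1 + 1/N) = 1 := by rw [hr]; field_simp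
  have hkey : r^m * Q^2 ≤ 1 := by
    calc r^m * Q^2 ≤ r^m * (1+1/N)^m := mul_le_mul_of_nonneg_left hQ2 (by positivity)
      _ = (r * (1+1/N))^m := by rw [mul_pow]
      _ = 1 := by rw [hrinv, one_pow]
  have hrm : r^m ≤ (Q⁻¹)^2 := by
    rw [inv_pow, inv_eq_one_div, le_div_iff₀ (by positivity)]
    exact hkey
  have : ((N:ℝ)+(k:ℝ)/2) = N+1+(m:ℝ)/2 := by rw [hkm]; ring
  rw [this, show (N+1)/(N+1+(m:ℝ)/2) = Q⁻¹ by rw [hQ, inv_div]]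
  calc Real.sqrt (r^m) ≤ Real.sqrt ((Q⁻¹)^2) := Real.sqrt_le_sqrt hrm
    _ = Q⁻¹ := Real.sqrt_sq (by positivity)

lemma kt_key (n k t : ℕ) (hn : 1 ≤ n) (hk : 2 ≤ k) (ht : t ≤ n) :
    ((t:ℝ)+1)^(t+1) * (n:ℝ)^n / ((n:ℝ)+1)^(n+1) * Real.sqrt (((n:ℝ)/((n:ℝ)+1))^(k-1))
      ≤ (t:ℝ)^t * (((t:ℝ) + 1/2)/((n:ℝ)+(k:ℝ)/2)) := by
  have hN1 : (1:ℝ) ≤ (n:ℝ) := by exact_mod_cast hn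
  set N : ℝ := (n:ℝ) with hN
  have hN0 : (0:ℝ) < N := by linarith
  set r : ℝ := N/(N+1) with hr
  have hr0 : 0 < r := by positivity
  have hE : (0:ℝ) < Real.exp 1 := Real.exp_pos 1
  have htt : (0:ℝ) < (t:ℝ)^t := by
    rcases Nat.eq_zero_or_pos t with h | h
    · subst h; norm_num
    · have : (0:ℝ) < (t:ℝ) := by exact_mod_cast h
      positivity
  have hk2 : (0:ℝ) < N + (k:ℝ)/2 := by positivity
  -- three bounds
  have h1 : ((t:ℝ)+1)^(t+1) ≤ (t:ℝ)^t * (((t:ℝ)+1) * (Real.exp 1 * (2*(t:ℝ)+1)/(2*(t:ℝ)+2))) := by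
    have := kt_L2' t
    rwa [div_le_iff₀ htt, mul_comm] at this
  have h2 : r^n * Real.sqrt r ≤ (Real.exp 1)⁻¹ := by
    have := kt_A2' n hn
    rw [← hN, ← hr] at this
    rw [inv_eq_one_div, le_div_iff₀ hE]
    linarith [this]
  have h3 : Real.sqrt (r^(k-2)) ≤ (N+1)/(N+(k:ℝ)/2) := kt_B n k hn hk
  -- combine
  have hsplit : Real.sqrt (r^(k-1)) = Real.sqrt (r^(k-2)) * Real.sqrt r := by
    rw [← Real.sqrt_mul (by positivity), ← pow_succ]
    congr 2
    omega
  have hLHS : ((t:ℝ)+1)^(t+1) * N^n / (N+1)^(n+1) * Real.sqrt (r^(k-1))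
      = ((t:ℝ)+1)^(t+1) * (r^n * Real.sqrt r) * Real.sqrt (r^(k-2)) / (N+1) := by
    rw [hsplit, hr, div_pow, pow_succ]
    field_simp
    rw [div_pow]
    field_simp
    ring
  rw [hLHS]
  have hmul : ((t:ℝ)+1)^(t+1) * (r^n * Real.sqrt r) * Real.sqrt (r^(k-2))
      ≤ ((t:ℝ)^t * (((t:ℝ)+1) * (Real.exp 1 * (2*(t:ℝ)+1)/(2*(t:ℝ)+2)))) * (Real.exp 1)⁻¹
        * ((N+1)/(N+(k:ℝ)/2)) := by
    apply mul_le_mul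
    · apply mul_le_mul h1 h2 (by positivity) (by positivity)
    · exact h3
    · positivity
    · positivity
  have hfin : ((t:ℝ)^t * (((t:ℝ)+1) * (Real.exp 1 * (2*(t:ℝ)+1)/(2*(t:ℝ)+2)))) * (Real.exp 1)⁻¹
        * ((N+1)/(N+(k:ℝ)/2)) / (N+1) = (t:ℝ)^t * (((t:ℝ) + 1/2)/(N+(k:ℝ)/2)) := by
    have ht2 : (0:ℝ) < 2*(t:ℝ)+2 := by positivity
    field_simp
  rw [← hfin]
  apply div_le_div_of_nonneg_right hmul (by positivity) |>.trans_eq rfl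

lemma kt_step (n k t : ℕ) (hn : 1 ≤ n) (hk : 2 ≤ k) (ht : t ≤ n) :
    (((t:ℝ)+1)/((n:ℝ)+1))^(t+1) * ((n:ℝ)/((n:ℝ)+1))^(n-t) * (Real.sqrt (((n:ℝ)+1)^(k-1)))⁻¹
      ≤ ((t:ℝ)/(n:ℝ))^t * (Real.sqrt ((n:ℝ)^(k-1)))⁻¹ *
          (((t:ℝ) + 1/2)/(((n:ℝ)+1) + (k:ℝ)/2 - 1)) := by
  have hN1 : (1:ℝ) ≤ (n:ℝ) := by exact_mod_cast hn
  set N : ℝ := (n:ℝ) with hN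
  have hN0 : (0:ℝ) < N := by linarith
  have hs1 : (0:ℝ) < Real.sqrt (N^(k-1)) := Real.sqrt_pos.mpr (by positivity)
  have hs2 : (0:ℝ) < Real.sqrt ((N+1)^(k-1)) := Real.sqrt_pos.mpr (by positivity)
  have key := kt_key n k t hn hk ht
  rw [← hN] at key
  have hden : ((N:ℝ)+1) + (k:ℝ)/2 - 1 = N + (k:ℝ)/2 := by ring
  rw [hden]
  have hsqrt_div : Real.sqrt ((N/(N+1))^(k-1)) = Real.sqrt (N^(k-1)) / Real.sqrt ((N+1)^(k-1)) := by
    rw [div_pow, Real.sqrt_div (by positivity)]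
  rw [hsqrt_div] at key
  -- rewrite goal sides
  have hL : (((t:ℝ)+1)/(N+1))^(t+1) * (N/(N+1))^(n-t) * (Real.sqrt ((N+1)^(k-1)))⁻¹
      = (((t:ℝ)+1)^(t+1) * N^n / (N+1)^(n+1) * (Real.sqrt (N^(k-1)) / Real.sqrt ((N+1)^(k-1))))
        / (N^t * Real.sqrt (N^(k-1))) := by
    rw [div_pow, div_pow, pow_sub₀ N (ne_of_gt hN0) ht]
    rw [show (N+1)^(n+1) = (N+1)^(t+1) * (N+1)^(n-t) by
      rw [← pow_add]; congr 1; omega]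
    field_simp
  have hR : ((t:ℝ)/N)^t * (Real.sqrt (N^(k-1)))⁻¹ * (((t:ℝ) + 1/2)/(N+(k:ℝ)/2))
      = ((t:ℝ)^t * (((t:ℝ) + 1/2)/(N+(k:ℝ)/2))) / (N^t * Real.sqrt (N^(k-1))) := by
    rw [div_pow]
    field_simp
  rw [hL, hR]
  exact div_le_div_of_nonneg_right key (by positivity) |>.trans_eq rfl

def mcount {σ : Type*} [DecidableEq σ] (x : ℕ → σ) (a : σ) (j : ℕ) : ℕ :=
  ((Finset.Icc 1 j).filter (fun i => x i = a)).card

lemma cnt_succ {σ : Type*} [DecidableEq σ] (x : ℕ → σ) (n : ℕ) :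
    cnt x (n+1) = mcount x (x (n+1)) n := by
  rw [cnt, mcount, Finset.Ico_add_one_right_eq_Icc]

lemma mcount_le {σ : Type*} [DecidableEq σ] (x : ℕ → σ) (a : σ) (n : ℕ) :
    mcount x a n ≤ n := by
  calc mcount x a n ≤ (Finset.Icc 1 n).card := Finset.card_filter_le _ _
    _ = n := by rw [Nat.card_Icc]; omega

lemma mcount_succ {σ : Type*} [DecidableEq σ] (x : ℕ → σ) (a : σ) (n : ℕ) :
    mcount x a (n+1) = mcount x a n + if x (n+1) = a then 1 else 0 := by
  rw [mcount, mcount, show Finset.Icc 1 (n+1) = insert (n+1) (Finset.Icc 1 n) by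
    ext i; simp [Finset.mem_Icc, Finset.mem_insert]; omega]
  rw [Finset.filter_insert]
  split_ifs with h
  · rw [Finset.card_insert_of_notMem (by simp)]
  · simp
lemma sum_mcount {σ : Type*} [DecidableEq σ] (A : Finset σ) (x : ℕ → σ) (n : ℕ)
    (hx : ∀ i ∈ Finset.Icc 1 n, x i ∈ A) : ∑ a ∈ A, mcount x a n = n := by
  rw [show ∑ a ∈ A, mcount x a n = ∑ a ∈ A, ((Finset.Icc 1 n).filter (fun i => x i = a)).card
    from rfl, ← Finset.card_eq_sum_card_fiberwise hx, Nat.card_Icc]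
  omega

lemma kt_main {σ : Type*} [DecidableEq σ] (A : Finset σ) (hk2 : 2 ≤ A.card) (x : ℕ → σ) :
    ∀ n, 1 ≤ n → (∀ i ∈ Finset.Icc 1 n, x i ∈ A) →
    (∏ a ∈ A, ((mcount x a n : ℝ)/(n:ℝ))^(mcount x a n)) *
        (Real.sqrt ((n:ℝ)^(A.card-1)))⁻¹ * ((2:ℝ)^(A.card-1))⁻¹ ≤ rho A x n := by
  set k := A.card with hkdef
  have hk0 : (0:ℝ) < (k:ℝ) := by
    have : 0 < k := by omega
    exact_mod_cast this
  intro n hn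
  induction n, hn using Nat.le_induction with
  | base =>
    intro _
    have hcnt1 : cnt x 1 = 0 := by simp [cnt]
    have hrho1 : rho A x 1 = 1/(k:ℝ) := by
      rw [rho, Finset.Icc_self, Finset.prod_singleton, hcnt1]
      rw [← hkdef]
      push_cast
      rw [show (1:ℝ) + (k:ℝ)/2 - 1 = (k:ℝ)/2 by ring]
      rw [div_eq_div_iff (by positivity) (ne_of_gt hk0)]
      ring
    have hprod1 : (∏ a ∈ A, ((mcount x a 1 : ℝ)/((1:ℕ):ℝ))^(mcount x a 1)) = 1 := by
      apply Finset.prod_eq_one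
      intro a _
      have h01 : mcount x a 1 = 0 ∨ mcount x a 1 = 1 := by
        have := mcount_le x a 1; omega
      rcases h01 with h | h <;> simp [h]
    rw [hrho1, hprod1]
    have hsq : Real.sqrt (((1:ℕ):ℝ)^(k-1)) = 1 := by
      rw [Nat.cast_one, one_pow, Real.sqrt_one]
    rw [hsq]
    have hkpow : (k:ℝ) ≤ (2:ℝ)^(k-1) := by
      have h1 : k ≤ 2^(k-1) := by
        have := Nat.lt_two_pow_self (n := k-1)
        omega
      calc (k:ℝ) ≤ ((2^(k-1) : ℕ):ℝ) := by exact_mod_cast h1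
        _ = (2:ℝ)^(k-1) := by push_cast; ring
    rw [inv_one, mul_one, one_mul, inv_eq_one_div, div_le_div_iff₀ (by positivity) hk0]
    nlinarith [hkpow]
  | succ n hn ih =>
    intro hx
    have hxn : ∀ i ∈ Finset.Icc 1 n, x i ∈ A := by
      intro i hi
      apply hx
      simp only [Finset.mem_Icc] at *
      omega
    have hb : x (n+1) ∈ A := hx (n+1) (by simp [Finset.mem_Icc] <;> omega)
    set b := x (n+1) with hbdef
    set t := mcount x b n with htdef
    have ht : t ≤ n := mcount_le x b n
    have hN0 : (0:ℝ) < (n:ℝ) := by exact_mod_cast hn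
    have hFden : (0:ℝ) < ((n:ℝ)+1) + (k:ℝ)/2 - 1 := by
      have : ((n:ℝ)+1) + (k:ℝ)/2 - 1 = (n:ℝ) + (k:ℝ)/2 := by ring
      rw [this]; positivity
    set F : ℝ := (((t:ℝ) + 1/2)/(((n:ℝ)+1) + (k:ℝ)/2 - 1)) with hFdef
    have hF0 : 0 ≤ F := by positivity
    have hrho : rho A x (n+1) = rho A x n * F := by
      rw [rho, rho, Finset.prod_Icc_succ_top (by omega : 1 ≤ n+1), cnt_succ]
      congr 1
      rw [hFdef, ← hkdef, ← hbdef, ← htdef]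
      push_cast
      ring
    -- products
    set Q : ℝ := ∏ a ∈ A.erase b, ((mcount x a n : ℝ)/(n:ℝ))^(mcount x a n) with hQdef
    have hQ0 : 0 ≤ Q := Finset.prod_nonneg (fun a _ => by positivity)
    have hsum_erase : ∑ a ∈ A.erase b, mcount x a n = n - t := by
      have h2 := sum_mcount A x n hxn
      have h1 : ∑ a ∈ A.erase b, mcount x a n + t = n := by
        have h3 := Finset.sum_erase_add A (fun a => mcount x a n) hb
        simp only [← htdef] at h3
        rw [h3, h2]
      omega
    have hP : (∏ a ∈ A, ((mcount x a n : ℝ)/(n:ℝ))^(mcount x a n))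
        = Q * ((t:ℝ)/(n:ℝ))^t := by
      rw [hQdef, ← Finset.prod_erase_mul A _ hb, htdef]
    have hmc_erase : ∀ a ∈ A.erase b, mcount x a (n+1) = mcount x a n := by
      intro a ha
      rw [mcount_succ, if_neg, add_zero]
      exact fun h => (Finset.mem_erase.mp ha).1 (h ▸ rfl) |>.elim
    have hmc_b : mcount x b (n+1) = t + 1 := by
      rw [mcount_succ, if_pos rfl, htdef]
    have hP' : (∏ a ∈ A, ((mcount x a (n+1) : ℝ)/((n:ℝ)+1))^(mcount x a (n+1)))
        = Q * ((n:ℝ)/((n:ℝ)+1))^(n-t) * (((t:ℝ)+1)/((n:ℝ)+1))^(t+1) := by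
      rw [← Finset.prod_erase_mul A _ hb, hmc_b]
      have e1 : ∏ a ∈ A.erase b, ((mcount x a (n+1) : ℝ)/((n:ℝ)+1))^(mcount x a (n+1))
          = ∏ a ∈ A.erase b, (((mcount x a n : ℝ)/(n:ℝ))^(mcount x a n)
              * ((n:ℝ)/((n:ℝ)+1))^(mcount x a n)) := by
        apply Finset.prod_congr rfl
        intro a ha
        rw [hmc_erase a ha, ← mul_pow]
        congr 2
        field_simp
      rw [e1, Finset.prod_mul_distrib, Finset.prod_pow_eq_pow_sum, hsum_erase, ← hQdef]
      push_cast
      ring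
    -- final chain
    have step := kt_step n k t hn hk2 ht
    have hc0 : (0:ℝ) ≤ ((2:ℝ)^(k-1))⁻¹ := by positivity
    have hcast : ((n+1 : ℕ):ℝ) = (n:ℝ)+1 := by push_cast; ring
    rw [hcast, hP', hrho]
    calc Q * ((n:ℝ)/((n:ℝ)+1))^(n-t) * (((t:ℝ)+1)/((n:ℝ)+1))^(t+1)
          * (Real.sqrt (((n:ℝ)+1)^(k-1)))⁻¹ * ((2:ℝ)^(k-1))⁻¹
        = Q * ((((t:ℝ)+1)/((n:ℝ)+1))^(t+1) * ((n:ℝ)/((n:ℝ)+1))^(n-t)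
            * (Real.sqrt (((n:ℝ)+1)^(k-1)))⁻¹) * ((2:ℝ)^(k-1))⁻¹ := by ring
      _ ≤ Q * (((t:ℝ)/(n:ℝ))^t * (Real.sqrt ((n:ℝ)^(k-1)))⁻¹ * F) * ((2:ℝ)^(k-1))⁻¹ := by
          apply mul_le_mul_of_nonneg_right (mul_le_mul_of_nonneg_left step hQ0) hc0
      _ = ((Q * ((t:ℝ)/(n:ℝ))^t) * (Real.sqrt ((n:ℝ)^(k-1)))⁻¹ * ((2:ℝ)^(k-1))⁻¹) * F := by ring
      _ ≤ rho A x n * F := by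
          apply mul_le_mul_of_nonneg_right _ hF0
          rw [← hP]
          exact ih hxn

lemma kt_gibbs {σ : Type*} [DecidableEq σ] (A : Finset σ) (θ : σ → ℝ)
    (hθ0 : ∀ a ∈ A, 0 ≤ θ a) (hsum : ∑ a ∈ A, θ a = 1) (m : σ → ℕ) (n : ℕ) (hn : 1 ≤ n)
    (hm : ∑ a ∈ A, m a = n) :
    ∏ a ∈ A, θ a ^ m a ≤ ∏ a ∈ A, ((m a : ℝ)/(n:ℝ))^(m a) := by
  have hN0 : (0:ℝ) < n := by exact_mod_cast hn
  by_cases hz : ∃ a ∈ A, θ a = 0 ∧ m a ≠ 0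
  · obtain ⟨a, ha, h0, hm0⟩ := hz
    have hza : θ a ^ m a = 0 := by rw [h0, zero_pow hm0]
    calc ∏ a ∈ A, θ a ^ m a = 0 := Finset.prod_eq_zero ha hza
      _ ≤ _ := Finset.prod_nonneg (fun a _ => by positivity)
  · push_neg at hz
    set S := A.filter (fun a => m a ≠ 0) with hS
    have hSsub : S ⊆ A := Finset.filter_subset _ _
    have hmem : ∀ a ∈ S, a ∈ A ∧ m a ≠ 0 := fun a ha => Finset.mem_filter.mp ha
    have hpos : ∀ a ∈ S, 0 < θ a := by
      intro a ha
      rcases (hθ0 a (hmem a ha).1).lt_or_eq with h | h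
      · exact h
      · exact absurd (hz a (hmem a ha).1 h.symm) (hmem a ha).2
    have hmpos : ∀ a ∈ S, 0 < (m a : ℝ) := by
      intro a ha
      exact_mod_cast Nat.pos_of_ne_zero (hmem a ha).2
    have hzero : ∀ a ∈ A, a ∉ S → m a = 0 := by
      intro a ha hnot
      by_contra h
      exact hnot (Finset.mem_filter.mpr ⟨ha, h⟩)
    have hLe : ∏ a ∈ A, θ a ^ m a = ∏ a ∈ S, θ a ^ m a :=
      (Finset.prod_subset hSsub (fun a ha hnot => by rw [hzero a ha hnot, pow_zero])).symm
    have hRe : ∏ a ∈ A, ((m a:ℝ)/(n:ℝ))^(m a) = ∏ a ∈ S, ((m a:ℝ)/(n:ℝ))^(m a) :=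
      (Finset.prod_subset hSsub (fun a ha hnot => by rw [hzero a ha hnot, pow_zero])).symm
    rw [hLe, hRe]
    have hL0 : 0 < ∏ a ∈ S, θ a ^ m a := Finset.prod_pos (fun a ha => pow_pos (hpos a ha) _)
    have hR0 : 0 < ∏ a ∈ S, ((m a:ℝ)/(n:ℝ))^(m a) :=
      Finset.prod_pos (fun a ha => pow_pos (div_pos (hmpos a ha) hN0) _)
    rw [← Real.log_le_log_iff hL0 hR0,
      Real.log_prod (fun a ha => (pow_pos (hpos a ha) _).ne'),
      Real.log_prod (fun a ha => (pow_pos (div_pos (hmpos a ha) hN0) _).ne')]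
    simp only [Real.log_pow]
    rw [← sub_nonneg, ← Finset.sum_sub_distrib]
    have key : ∀ a ∈ S, (m a:ℝ) * Real.log (θ a) - (m a:ℝ) * Real.log ((m a:ℝ)/(n:ℝ))
        ≤ θ a * n - m a := by
      intro a ha
      have h1 : Real.log (θ a) - Real.log ((m a:ℝ)/(n:ℝ)) = Real.log (θ a * n / (m a:ℝ)) := by
        rw [Real.log_div (mul_ne_zero (ne_of_gt (hpos a ha)) (ne_of_gt hN0)) (ne_of_gt (hmpos a ha)),
          Real.log_div (ne_of_gt (hmpos a ha)) (ne_of_gt hN0),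
          Real.log_mul (ne_of_gt (hpos a ha)) (ne_of_gt hN0)]
        ring
      have h2 : Real.log (θ a * n / (m a:ℝ)) ≤ θ a * n/(m a:ℝ) - 1 :=
        Real.log_le_sub_one_of_pos (div_pos (mul_pos (hpos a ha) hN0) (hmpos a ha))
      calc (m a:ℝ) * Real.log (θ a) - (m a:ℝ) * Real.log ((m a:ℝ)/(n:ℝ))
          = (m a:ℝ) * (Real.log (θ a * n / (m a:ℝ))) := by rw [← h1]; ring
        _ ≤ (m a:ℝ) * (θ a * n/(m a:ℝ) - 1) :=
            mul_le_mul_of_nonneg_left h2 (hmpos a ha).le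
        _ = θ a * n - m a := by
            rw [mul_sub, mul_one, mul_div_cancel₀ _ (ne_of_gt (hmpos a ha))]
    have hsum2 : ∑ a ∈ S, (θ a * n - (m a:ℝ)) ≤ 0 := by
      rw [Finset.sum_sub_distrib, ← Finset.sum_mul]
      have hθS : ∑ a ∈ S, θ a ≤ 1 :=
        hsum ▸ Finset.sum_le_sum_of_subset_of_nonneg hSsub (fun a ha _ => hθ0 a ha)
      have hmS : ∑ a ∈ S, (m a:ℝ) = (n:ℝ) := by
        have h4 : ∑ a ∈ S, m a = n := by
          rw [← hm]
          exact Finset.sum_subset hSsub (fun a ha hnot => hzero a ha hnot)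
        exact_mod_cast h4
      rw [hmS]
      nlinarith
    calc ∑ a ∈ S, ((m a:ℝ) * Real.log ((m a:ℝ)/(n:ℝ)) - (m a:ℝ) * Real.log (θ a))
        = - ∑ a ∈ S, ((m a:ℝ) * Real.log (θ a) - (m a:ℝ) * Real.log ((m a:ℝ)/(n:ℝ))) := by
          rw [← Finset.sum_neg_distrib]
          exact Finset.sum_congr rfl (fun a _ => by ring)
      _ ≥ - ∑ a ∈ S, (θ a * n - (m a:ℝ)) := neg_le_neg (Finset.sum_le_sum key)
      _ ≥ 0 := by linarith
lemma kt_prod_theta {σ : Type*} [DecidableEq σ] (A : Finset σ) (θ : σ → ℝ) (x : ℕ → σ) (n : ℕ)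
    (hx : ∀ i ∈ Finset.Icc 1 n, x i ∈ A) :
    ∏ i ∈ Finset.Icc 1 n, θ (x i) = ∏ a ∈ A, θ a ^ (mcount x a n) := by
  rw [← Finset.prod_fiberwise_of_maps_to hx (fun i => θ (x i))]
  apply Finset.prod_congr rfl
  intro a _
  calc ∏ i ∈ (Finset.Icc 1 n).filter (fun i => x i = a), θ (x i)
      = ∏ i ∈ (Finset.Icc 1 n).filter (fun i => x i = a), θ a := by
        apply Finset.prod_congr rfl
        intro i hi
        rw [(Finset.mem_filter.mp hi).2]
    _ = θ a ^ (mcount x a n) := by rw [Finset.prod_const, mcount]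

/-- The Krichevsky–Trofimov redundancy bound for the Sequential Dirichlet estimator,
in the equivalent product form: for any memoryless source `μ(x₁..xₙ) = ∏ᵢ θ(xᵢ)` over `A`,
`ρ_A(x₁..xₙ) ≥ μ(x₁..xₙ) · n^(-(|A|-1)/2) · 2^(-(|A|-1))`, i.e.
`-log₂(ρ_A/μ) ≤ ((|A|-1)/2)·log₂ n + |A| - 1`. -/
theorem kt_redundancy_bound {σ : Type*} [DecidableEq σ]
    (A : Finset σ) (hA : A.Nonempty) (θ : σ → ℝ)
    (hθ0 : ∀ a ∈ A, 0 ≤ θ a) (hθ1 : ∀ a ∈ A, θ a ≤ 1)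
    (hsum : ∑ a ∈ A, θ a = 1)
    (n : ℕ) (hn : 1 ≤ n) (x : ℕ → σ) (hx : ∀ i ∈ Finset.Icc 1 n, x i ∈ A) :
    rho A x n ≥
      (∏ i ∈ Finset.Icc 1 n, θ (x i)) *
        (n : ℝ) ^ (-(((A.card : ℝ) - 1) / 2)) *
        (2 : ℝ) ^ (-((A.card : ℝ) - 1)) := by
  have hcard1 : 1 ≤ A.card := Finset.card_pos.mpr hA
  by_cases hk1 : A.card = 1
  · -- singleton alphabet
    obtain ⟨a, rfl⟩ := Finset.card_eq_one.mp hk1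
    have hxa : ∀ i ∈ Finset.Icc 1 n, x i = a := fun i hi => Finset.mem_singleton.mp (hx i hi)
    have hθa : θ a = 1 := by simpa using hsum
    have hprod : ∏ i ∈ Finset.Icc 1 n, θ (x i) = 1 :=
      Finset.prod_eq_one (fun i hi => by rw [hxa i hi, hθa])
    have hrho : rho {a} x n = 1 := by
      rw [rho]
      apply Finset.prod_eq_one
      intro i hi
      have hi' := Finset.mem_Icc.mp hi
      have hcnt : cnt x i = i - 1 := by
        rw [cnt, Finset.filter_true_of_mem, Nat.card_Ico]
        intro j hj
        have hj' := Finset.mem_Ico.mp hj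
        rw [hxa j (Finset.mem_Icc.mpr ⟨hj'.1, by omega⟩), hxa i hi]
      rw [hcnt, Finset.card_singleton]
      have hic : ((i-1:ℕ):ℝ) = (i:ℝ) - 1 := by
        rw [Nat.cast_sub hi'.1, Nat.cast_one]
      rw [hic]
      have hi1 : (1:ℝ) ≤ (i:ℝ) := by exact_mod_cast hi'.1
      rw [div_eq_one_iff_eq (by push_cast; nlinarith)]
      push_cast
      ring
    rw [hprod, hrho, Finset.card_singleton]
    norm_num
  · have hk2 : 2 ≤ A.card := by omega
    have main := kt_main A hk2 x n hn hx
    have gibbs := kt_gibbs A θ hθ0 hsum (fun a => mcount x a n) n hn (sum_mcount A x n hx)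
    have pt := kt_prod_theta A θ x n hx
    have hc : ((A.card:ℝ)-1) = ((A.card-1:ℕ):ℝ) := by
      rw [Nat.cast_sub hcard1, Nat.cast_one]
    have e1 : (n:ℝ) ^ (-(((A.card:ℝ)-1)/2)) = (Real.sqrt ((n:ℝ)^(A.card-1)))⁻¹ := by
      rw [Real.rpow_neg (Nat.cast_nonneg n), hc]
      congr 1
      rw [show (((A.card-1:ℕ):ℝ))/2 = ((A.card-1:ℕ):ℝ) * (1/2) by ring,
        Real.rpow_mul (Nat.cast_nonneg n), Real.rpow_natCast, Real.sqrt_eq_rpow]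
    have e2 : (2:ℝ) ^ (-((A.card:ℝ)-1)) = ((2:ℝ)^(A.card-1))⁻¹ := by
      rw [show -((A.card:ℝ)-1) = -(((A.card:ℝ)-1)) by ring, Real.rpow_neg (by norm_num), hc,
        Real.rpow_natCast]
    rw [ge_iff_le, e1, e2, pt]
    calc (∏ a ∈ A, θ a ^ mcount x a n) * (Real.sqrt ((n:ℝ)^(A.card-1)))⁻¹ * ((2:ℝ)^(A.card-1))⁻¹
        ≤ (∏ a ∈ A, ((mcount x a n : ℝ)/(n:ℝ))^(mcount x a n))
            * (Real.sqrt ((n:ℝ)^(A.card-1)))⁻¹ * ((2:ℝ)^(A.card-1))⁻¹ := by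
          apply mul_le_mul_of_nonneg_right (mul_le_mul_of_nonneg_right gibbs (by positivity))
            (by positivity)
      _ ≤ rho A x n := main
end
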